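/- Let M be a nonzero comultiplication R-module with finite clique number for its large sum graph Ǵ(M) and with n = |Min(M)| ≥ 2 minimal submodules. Then ω(Ǵ(M)) ≥ 2^{n-1} − 1. -/

import Mathlib

/-- `M` is a comultiplication `R`-module: every submodule is of the form `(0 :_M I)`. -/
def IsComultiplication (R M : Type*) [CommRing R] [AddCommGroup M] [Module R M] : Prop :=
  ∀ N : Submodule R M, ∃ I : Ideal R, ∀ m : M, m ∈ N ↔ ∀ r ∈ I, r • m = 0

/-- A submodule is large (essential) if it meets every nonzero submodule nontrivially. -/
def IsLarge {R M : Type*} [CommRing R] [AddCommGroup M] [Module R M]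
    (N : Submodule R M) : Prop :=
  ∀ L : Submodule R M, L ≠ ⊥ → N ⊓ L ≠ ⊥

/-- The vertices of the large sum graph: nonzero non-large submodules. -/
abbrev LargeSumVtx (R M : Type*) [CommRing R] [AddCommGroup M] [Module R M] :=
  {N : Submodule R M // N ≠ ⊥ ∧ ¬ IsLarge N}

/-- The large sum graph: distinct nonzero non-large submodules `N, K` are adjacent
iff `N + K` is not large. -/
def largeSumGraph (R M : Type*) [CommRing R] [AddCommGroup M] [Module R M] :
    SimpleGraph (LargeSumVtx R M) where
  Adj N K := N ≠ K ∧ ¬ IsLarge (N.1 ⊔ K.1)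
  symm := ⟨fun a b ⟨h1, h2⟩ => ⟨h1.symm, by rwa [sup_comm]⟩⟩
  loopless := ⟨fun a h => h.1 rfl⟩

section Aux
variable {R M : Type*} [CommRing R] [AddCommGroup M] [Module R M]

lemma comult_mem (hc : IsComultiplication R M) (N : Submodule R M) (m : M) :
    m ∈ N ↔ ∀ r ∈ N.annihilator, r • m = 0 := by
  obtain ⟨I, hI⟩ := hc N
  constructor
  · exact fun hm r hr => Submodule.mem_annihilator.1 hr m hm
  · intro h
    rw [hI]
    intro r hr
    exact h r (Submodule.mem_annihilator.2 fun x hx => (hI x).1 hx r hr)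

lemma ann_inj (hc : IsComultiplication R M) {N P : Submodule R M}
    (h : N.annihilator = P.annihilator) : N = P := by
  ext m; rw [comult_mem hc N, comult_mem hc P, h]

lemma atom_ann_max {S : Submodule R M} (hS : IsAtom S) : S.annihilator.IsMaximal := by
  have : IsSimpleModule R S := isSimpleModule_iff_isAtom.2 hS
  exact IsSimpleModule.annihilator_isMaximal

lemma key_not_le_sup (hc : IsComultiplication R M) {S : Submodule R M} (hS : IsAtom S)
    {A : Finset (Submodule R M)} (hA : ∀ T ∈ A, IsAtom T) (hSA : S ∉ A) :
    ¬ S ≤ A.sup id := by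
  intro hle
  have hmax := atom_ann_max hS
  have hprime : S.annihilator.IsPrime := hmax.isPrime
  have h1 : (A.sup id).annihilator ≤ S.annihilator := Submodule.annihilator_mono hle
  have h2 : A.inf (fun T => T.annihilator) ≤ (A.sup id).annihilator := by
    intro r hr
    rw [Submodule.mem_annihilator]
    intro m hm
    have hsup : A.sup id ≤ Submodule.torsionBy R M r := by
      refine Finset.sup_le fun T hT x hx => ?_
      have hinf : A.inf (fun T => T.annihilator) ≤ T.annihilator := Finset.inf_le hT
      exact (Submodule.mem_torsionBy_iff _ _).2
        (Submodule.mem_annihilator.1 (hinf hr) x hx)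
    exact (Submodule.mem_torsionBy_iff _ _).1 (hsup hm)
  obtain ⟨T, hT, hle'⟩ := (Ideal.IsPrime.inf_le' hprime).1 (h2.trans h1)
  have heq : T.annihilator = S.annihilator :=
    (atom_ann_max (hA T hT)).eq_of_le hprime.ne_top hle'
  exact hSA (ann_inj hc heq ▸ hT)

end Aux

/-- If the large sum graph of a nonzero comultiplication module has finite clique number and the
module has `n ≥ 2` minimal submodules, then the clique number is at least `2 ^ (n - 1) - 1`. -/

theorem stmt16 {R M : Type*} [CommRing R] [AddCommGroup M] [Module R M]
    [Nontrivial M] (hc : IsComultiplication R M)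
    (hbdd : BddAbove {n : ℕ | ∃ s, (largeSumGraph R M).IsNClique n s})
    (n : ℕ) (hn : Nat.card {S : Submodule R M | IsAtom S} = n) (hn2 : 2 ≤ n) :
    2 ^ (n - 1) - 1 ≤ (largeSumGraph R M).cliqueNum := by
  classical
  have hpos : 0 < Nat.card {S : Submodule R M | IsAtom S} := by rw [hn]; omega
  have hfin : {S : Submodule R M | IsAtom S}.Finite :=
    Set.finite_coe_iff.1 (Nat.card_pos_iff.1 hpos).2
  set t : Finset (Submodule R M) := hfin.toFinset with htdef
  have hatom : ∀ S ∈ t, IsAtom S := fun S hS => hfin.mem_toFinset.1 hS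
  have htcard : t.card = n := by
    rw [← hn, Nat.card_coe_set_eq, Set.ncard_eq_toFinset_card _ hfin]
  have ht2 : 0 < t.card := by omega
  obtain ⟨S₀, hS₀t⟩ := Finset.card_pos.1 ht2
  have hS₀ : IsAtom S₀ := hatom _ hS₀t
  set t' := t.erase S₀ with ht'
  have ht'card : t'.card = n - 1 := by
    rw [ht', Finset.card_erase_of_mem hS₀t, htcard]
  have hatom' : ∀ S ∈ t', IsAtom S := fun S hS => hatom S (Finset.mem_of_mem_erase hS)
  have hne : ∀ A : Finset (Submodule R M), A ⊆ t' → A.Nonempty → A.sup id ≠ ⊥ := by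
    rintro A hA ⟨X, hX⟩ h
    exact (hatom' X (hA hX)).1 (le_bot_iff.1 (h ▸ Finset.le_sup (f := id) hX))
  have hS₀notle : ∀ A : Finset (Submodule R M), A ⊆ t' → ¬ S₀ ≤ A.sup id := by
    intro A hA
    exact key_not_le_sup hc hS₀ (fun T hT => hatom' T (hA hT))
      (fun h => (Finset.ne_of_mem_erase (hA h)) rfl)
  have hnl : ∀ A : Finset (Submodule R M), A ⊆ t' → ¬ IsLarge (A.sup id) := by
    intro A hA hL
    refine hL S₀ hS₀.1 ?_
    rcases hS₀.le_iff.1 (inf_le_right : A.sup id ⊓ S₀ ≤ S₀) with h | h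
    · exact h
    · exact absurd ((le_of_eq h.symm).trans inf_le_left) (hS₀notle A hA)
  have hmono : ∀ A ⊆ t', ∀ B ⊆ t', A.sup id ≤ B.sup id → A ⊆ B := by
    intro A hA B hB h X hX
    by_contra hXB
    exact key_not_le_sup hc (hatom' X (hA hX)) (fun T hT => hatom' T (hB hT)) hXB
      ((Finset.le_sup (f := id) hX).trans h)
  have hFinj : ∀ A ⊆ t', ∀ B ⊆ t', A.sup id = B.sup id → A = B := fun A hA B hB h =>
    Finset.Subset.antisymm (hmono A hA B hB h.le) (hmono B hB A hA h.ge)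
  set P : Finset (Finset (Submodule R M)) := t'.powerset.erase ∅ with hP
  have hPsub : ∀ A ∈ P, A ⊆ t' := fun A hA =>
    Finset.mem_powerset.1 (Finset.mem_of_mem_erase hA)
  have hPne : ∀ A ∈ P, A.Nonempty := fun A hA =>
    Finset.nonempty_iff_ne_empty.2 (Finset.ne_of_mem_erase hA)
  set G : {A // A ∈ P} → LargeSumVtx R M := fun A =>
    ⟨A.1.sup id, hne A.1 (hPsub A.1 A.2) (hPne A.1 A.2), hnl A.1 (hPsub A.1 A.2)⟩ with hG
  set s : Finset (LargeSumVtx R M) := P.attach.image G with hs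
  have hGinj : Function.Injective G := fun a b hab =>
    Subtype.ext (hFinj a.1 (hPsub a.1 a.2) b.1 (hPsub b.1 b.2) (congrArg Subtype.val hab))
  have hclique : (largeSumGraph R M).IsNClique (2 ^ (n - 1) - 1) s := by
    constructor
    · intro x hx y hy hxy
      simp only [hs, Finset.coe_image, Set.mem_image, Finset.mem_coe, Finset.mem_attach]
        at hx hy
      obtain ⟨a, -, rfl⟩ := hx
      obtain ⟨b, -, rfl⟩ := hy
      refine ⟨hxy, ?_⟩
      show ¬ IsLarge (a.1.sup id ⊔ b.1.sup id)
      rw [← Finset.sup_union]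
      exact hnl _ (Finset.union_subset (hPsub a.1 a.2) (hPsub b.1 b.2))
    · rw [hs, Finset.card_image_of_injective _ hGinj, Finset.card_attach, hP,
        Finset.card_erase_of_mem (Finset.empty_mem_powerset t'), Finset.card_powerset, ht'card]
  exact le_csSup hbdd ⟨s, hclique⟩
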